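/- Let m_p, m_n ∈ ℕ with M = m_p + m_n ≥ 1. Consider a uniformly random binary sequence s ∈ {0,1}^M containing exactly m_p ones (positive labels) and m_n zeros (negative labels). Let R_p be the number of positions i ∈ {1,…,M} at which a run of ones starts, i.e., s_i = 1 and (i = 1 or s_{i−1} = 0). Then E[R_p] = m_p·(1 + m_n)/M, and symmetrically the expected number of runs of zeros is E[R_n] = m_n·(1 + m_p)/M. -/
import Mathlib

open Finset

namespace RunsAux

variable {M : ℕ}

def runS (s : Fin M → Bool) (b : Bool) (i : Fin M) : Prop :=
  s i = b ∧ ((i : ℕ) = 0 ∨ ∃ j : Fin M, (j : ℕ) + 1 = (i : ℕ) ∧ s j = !b)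

instance (s : Fin M → Bool) (b : Bool) (i : Fin M) : Decidable (runS s b i) := by
  unfold runS; infer_instance

def SS (M k : ℕ) : Finset (Fin M → Bool) :=
  univ.filter (fun s => (univ.filter (fun i => s i = true)).card = k)

/-- composing with a permutation preserves the number of ones -/
lemma card_ones_comp (s : Fin M → Bool) (σ : Equiv.Perm (Fin M)) :
    (univ.filter (fun i => s (σ i) = true)).card = (univ.filter (fun i => s i = true)).card := by
  apply Finset.card_bij (fun i _ => σ i)
  · intro a ha; simp at ha ⊢; exact ha
  · intro a _ b _ h; exact σ.injective h
  · intro b hb; simp at hb; exact ⟨σ⁻¹ b, by simp [hb], by simp⟩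

lemma perm_filter_card (k : ℕ) (σ : Equiv.Perm (Fin M)) (Q : (Fin M → Bool) → Prop)
    [DecidablePred Q] :
    ((SS M k).filter (fun s => Q (fun x => s (σ x)))).card = ((SS M k).filter Q).card := by
  apply Finset.card_bij' (fun s _ => fun x => s (σ x)) (fun s _ => fun x => s (σ⁻¹ x))
  · intro s hs
    simp only [SS, mem_filter, mem_univ, true_and] at hs ⊢
    exact ⟨by rw [card_ones_comp]; exact hs.1, hs.2⟩
  · intro s hs
    simp only [SS, mem_filter, mem_univ, true_and] at hs ⊢
    constructor
    · rw [card_ones_comp]; exact hs.1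
    · convert hs.2 using 2; simp
  · intro s _; funext x; simp
  · intro s _; funext x; simp

end RunsAux

namespace RunsAux

variable {M : ℕ}

lemma A_eq (k : ℕ) (i i' : Fin M) :
    ((SS M k).filter (fun s => s i = true)).card
      = ((SS M k).filter (fun s => s i' = true)).card := by
  have h := perm_filter_card k (Equiv.swap i i') (fun s => s i = true)
  rw [← h]
  congr 1
  apply Finset.filter_congr
  intro s _
  simp [Equiv.swap_apply_left]

lemma sum_A (k : ℕ) :
    ∑ i : Fin M, ((SS M k).filter (fun s => s i = true)).card = k * (SS M k).card := by
  calc ∑ i : Fin M, ((SS M k).filter (fun s => s i = true)).card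
      = ∑ i : Fin M, ∑ s ∈ SS M k, (if s i = true then 1 else 0) := by
        simp_rw [Finset.card_filter]
    _ = ∑ s ∈ SS M k, ∑ i : Fin M, (if s i = true then 1 else 0) := Finset.sum_comm
    _ = ∑ s ∈ SS M k, k := by
        refine Finset.sum_congr rfl fun s hs => ?_
        rw [← Finset.card_filter]
        simpa [SS] using hs
    _ = k * (SS M k).card := by rw [Finset.sum_const, smul_eq_mul, mul_comm]

lemma A_val (k : ℕ) (i : Fin M) :
    M * ((SS M k).filter (fun s => s i = true)).card = k * (SS M k).card := by
  have h := sum_A (M := M) k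
  rw [Finset.sum_congr rfl (fun i' _ => A_eq k i' i)] at h
  rwa [Finset.sum_const, Finset.card_univ, Fintype.card_fin, smul_eq_mul] at h

lemma exists_perm (i j i' j' : Fin M) (hij : i ≠ j) (hij' : i' ≠ j') :
    ∃ σ : Equiv.Perm (Fin M), σ i = i' ∧ σ j = j' := by
  refine ⟨(Equiv.swap i i').trans (Equiv.swap ((Equiv.swap i i') j) j'), ?_, ?_⟩
  · have h1 : (Equiv.swap i i') j ≠ i' := by
      simp only [Equiv.swap_apply_def]
      split_ifs with h h' <;> simp_all
    simp only [Equiv.trans_apply, Equiv.swap_apply_left]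
    rw [Equiv.swap_apply_of_ne_of_ne (Ne.symm h1) hij']
  · simp only [Equiv.trans_apply, Equiv.swap_apply_left]

lemma B_eq (k : ℕ) {i j i' j' : Fin M} (hij : i ≠ j) (hij' : i' ≠ j') :
    ((SS M k).filter (fun s => s i = true ∧ s j = false)).card
      = ((SS M k).filter (fun s => s i' = true ∧ s j' = false)).card := by
  obtain ⟨σ, h1, h2⟩ := exists_perm i' j' i j hij' hij
  have h := perm_filter_card k σ (fun s => s i' = true ∧ s j' = false)
  rw [← h]
  congr 1
  apply Finset.filter_congr
  intro s _
  simp [h1, h2]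

end RunsAux

namespace RunsAux

variable {M : ℕ}

lemma card_false (k l : ℕ) (hkl : k + l = M) {s : Fin M → Bool} (hs : s ∈ SS M k) :
    (univ.filter (fun i => s i = false)).card = l := by
  have hk : (univ.filter (fun i => s i = true)).card = k := by simpa [SS] using hs
  have he : (univ.filter (fun i => s i = false))
      = univ \ (univ.filter (fun i => s i = true)) := by
    rw [← Finset.filter_not]
    apply Finset.filter_congr
    intro x _
    simp
  rw [he, Finset.card_sdiff_of_subset (Finset.filter_subset _ _), hk, Finset.card_univ, Fintype.card_fin]
  omega

lemma sum_B (k l : ℕ) (hkl : k + l = M) :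
    ∑ i : Fin M, ∑ j : Fin M,
        ((SS M k).filter (fun s => s i = true ∧ s j = false)).card
      = k * l * (SS M k).card := by
  calc ∑ i : Fin M, ∑ j : Fin M,
        ((SS M k).filter (fun s => s i = true ∧ s j = false)).card
      = ∑ i : Fin M, ∑ s ∈ SS M k, ∑ j : Fin M,
          (if s i = true ∧ s j = false then 1 else 0) := by
        refine Finset.sum_congr rfl fun i _ => ?_
        simp_rw [Finset.card_filter]
        exact Finset.sum_comm
    _ = ∑ s ∈ SS M k, ∑ i : Fin M, ∑ j : Fin M,
          (if s i = true ∧ s j = false then 1 else 0) := Finset.sum_comm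
    _ = ∑ _s ∈ SS M k, k * l := by
        refine Finset.sum_congr rfl fun s hs => ?_
        have h1 : (univ.filter (fun i => s i = true)).card = k := by simpa [SS] using hs
        have h2 : (univ.filter (fun j => s j = false)).card = l := card_false k l hkl hs
        have hsplit : ∀ i j : Fin M, (if s i = true ∧ s j = false then 1 else 0)
            = (if s i = true then 1 else 0) * (if s j = false then 1 else 0) := by
          intro i j
          by_cases h : s i = true <;> by_cases h' : s j = false <;> simp [h, h']
        simp_rw [hsplit]
        rw [← Finset.sum_mul_sum, ← Finset.card_filter, ← Finset.card_filter, h1, h2]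
    _ = k * l * (SS M k).card := by rw [Finset.sum_const, smul_eq_mul, mul_comm]

lemma B_val (k l : ℕ) (hkl : k + l = M) {i j : Fin M} (hij : i ≠ j) :
    M * ((M - 1) * ((SS M k).filter (fun s => s i = true ∧ s j = false)).card)
      = k * l * (SS M k).card := by
  have hdiag : ∀ i' : Fin M,
      ((SS M k).filter (fun s => s i' = true ∧ s i' = false)).card = 0 := by
    intro i'
    rw [Finset.card_eq_zero, Finset.filter_eq_empty_iff]
    rintro s _ ⟨h1, h2⟩
    simp [h1] at h2
  have hrow : ∀ i' : Fin M,
      ∑ j' : Fin M, ((SS M k).filter (fun s => s i' = true ∧ s j' = false)).card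
        = (M - 1) * ((SS M k).filter (fun s => s i = true ∧ s j = false)).card := by
    intro i'
    rw [← Finset.sum_erase_add _ _ (Finset.mem_univ i'), hdiag i', add_zero]
    rw [Finset.sum_congr rfl
      (fun j' hj' => B_eq k (Ne.symm (Finset.ne_of_mem_erase hj')) hij)]
    rw [Finset.sum_const, Finset.card_erase_of_mem (Finset.mem_univ i'),
      Finset.card_univ, Fintype.card_fin, smul_eq_mul]
  have hs := sum_B (M := M) k l hkl
  rw [Finset.sum_congr rfl (fun i' _ => hrow i')] at hs
  rwa [Finset.sum_const, Finset.card_univ, Fintype.card_fin, smul_eq_mul] at hs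

end RunsAux

namespace RunsAux

variable {M : ℕ}

lemma runS_zero (s : Fin M → Bool) (i : Fin M) (hi : (i : ℕ) = 0) :
    runS s true i ↔ s i = true :=
  ⟨fun h => h.1, fun h => ⟨h, Or.inl hi⟩⟩

lemma runS_succ (s : Fin M → Bool) (i : Fin M) (hi : (i : ℕ) ≠ 0) :
    runS s true i ↔ (s i = true ∧ s ⟨(i : ℕ) - 1, by omega⟩ = false) := by
  constructor
  · rintro ⟨h1, h2 | ⟨j, hj1, hj2⟩⟩
    · exact absurd h2 hi
    · refine ⟨h1, ?_⟩
      have : j = (⟨(i : ℕ) - 1, by omega⟩ : Fin M) := by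
        apply Fin.ext; simp; omega
      rw [← this]
      simpa using hj2
  · rintro ⟨h1, h2⟩
    exact ⟨h1, Or.inr ⟨⟨(i : ℕ) - 1, by omega⟩, by simp; omega, by simpa using h2⟩⟩

lemma SS_card_pos (k l : ℕ) (hkl : k + l = M) : 0 < (SS M k).card := by
  rw [Finset.card_pos]
  refine ⟨fun i => decide ((i : ℕ) < k), ?_⟩
  simp only [SS, Finset.mem_filter, Finset.mem_univ, true_and, decide_eq_true_eq]
  rw [← Finset.card_range k]
  apply Finset.card_bij (fun (i : Fin M) _ => (i : ℕ))
  · intro a ha; simp at ha ⊢; exact ha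
  · intro a _ b _ h; exact Fin.ext h
  · intro b hb
    simp at hb
    exact ⟨⟨b, by omega⟩, by simpa using hb, rfl⟩

lemma key (k l : ℕ) (hkl : k + l = M) (hM : 1 ≤ M) :
    M * (∑ s ∈ SS M k, (univ.filter (fun i => runS s true i)).card)
      = (k * (1 + l)) * (SS M k).card := by
  have hswap : (∑ s ∈ SS M k, (univ.filter (fun i => runS s true i)).card)
      = ∑ i : Fin M, ((SS M k).filter (fun s => runS s true i)).card := by
    simp_rw [Finset.card_filter]
    exact Finset.sum_comm
  have hsplit : ∑ i : Fin M, ((SS M k).filter (fun s => runS s true i)).card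
      = (∑ i ∈ Finset.univ.erase ⟨0, hM⟩,
          ((SS M k).filter (fun s => runS s true i)).card)
        + ((SS M k).filter (fun s => runS s true ⟨0, hM⟩)).card :=
    (Finset.sum_erase_add _ _ (Finset.mem_univ _)).symm
  have hN0 : ((SS M k).filter (fun s => runS s true ⟨0, hM⟩)).card
      = ((SS M k).filter (fun s => s ⟨0, hM⟩ = true)).card := by
    congr 1
    apply Finset.filter_congr
    intro s _
    exact runS_zero s _ rfl
  rw [hswap, hsplit, hN0]
  clear hswap hsplit hN0
  rcases Nat.lt_or_ge M 2 with hM2 | hM2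
  · -- M = 1
    have hempty : ∑ i ∈ Finset.univ.erase (⟨0, hM⟩ : Fin M),
        ((SS M k).filter (fun s => runS s true i)).card = 0 := by
      apply Finset.sum_eq_zero
      intro i hi
      exact absurd (Fin.ext (Nat.lt_one_iff.mp
          (Nat.lt_of_lt_of_le i.isLt (Nat.lt_succ_iff.mp hM2))))
        (Finset.ne_of_mem_erase hi)
    rw [hempty, zero_add, A_val]
    have hor : k = 0 ∨ l = 0 := by
      rcases Nat.eq_zero_or_pos k with h | h
      · exact Or.inl h
      · right
        by_contra hl
        have : 2 ≤ k + l := Nat.add_le_add h (Nat.pos_of_ne_zero hl)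
        exact absurd (hkl ▸ this) (Nat.not_le_of_lt hM2)
    have hval : k * (1 + l) = k := by
      rcases hor with h | h
      · rw [h]; ring
      · rw [h]; ring
    rw [hval]
  · -- M ≥ 2
    have h1M : 1 < M := hM2
    have hne10 : (⟨1, h1M⟩ : Fin M) ≠ ⟨0, hM⟩ := Fin.ne_of_val_ne one_ne_zero
    have hc : ∀ i ∈ Finset.univ.erase (⟨0, hM⟩ : Fin M),
        ((SS M k).filter (fun s => runS s true i)).card
          = ((SS M k).filter (fun s => s ⟨1, h1M⟩ = true ∧ s ⟨0, hM⟩ = false)).card := by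
      intro i hi
      have hne : (i : ℕ) ≠ 0 := fun h =>
        (Finset.ne_of_mem_erase hi) (Fin.ext h)
      rw [Finset.filter_congr (fun s _ => runS_succ s i hne)]
      exact B_eq k
        (Fin.ne_of_val_ne
          (Nat.sub_lt (Nat.pos_of_ne_zero hne) Nat.one_pos).ne')
        hne10
    rw [Finset.sum_congr rfl hc, Finset.sum_const,
      Finset.card_erase_of_mem (Finset.mem_univ _), Finset.card_univ,
      Fintype.card_fin, smul_eq_mul]
    rw [Nat.mul_add, A_val, B_val k l hkl hne10]
    ring

end RunsAux

namespace RunsAux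

variable {M : ℕ}

lemma flip_mem (k l : ℕ) (hkl : k + l = M) {s : Fin M → Bool} (hs : s ∈ SS M k) :
    (fun x => ! s x) ∈ SS M l := by
  have h2 := card_false k l hkl hs
  simp only [SS, Finset.mem_filter, Finset.mem_univ, true_and]
  rw [← h2]
  congr 1
  apply Finset.filter_congr
  intro x _
  simp

lemma runS_flip (s : Fin M → Bool) (i : Fin M) :
    runS (fun x => ! s x) true i ↔ runS s false i := by
  unfold runS
  simp

lemma flip_sum (k l : ℕ) (hkl : k + l = M) :
    ∑ s ∈ SS M k, (univ.filter (fun i => runS s false i)).card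
      = ∑ s ∈ SS M l, (univ.filter (fun i => runS s true i)).card := by
  refine Finset.sum_nbij' (fun s => fun x => ! s x) (fun s => fun x => ! s x)
    (fun s hs => flip_mem k l hkl hs)
    (fun s hs => by
      have := flip_mem l k (by omega) hs
      convert this using 2)
    (fun s _ => by funext x; simp)
    (fun s _ => by funext x; simp)
    (fun s _ => ?_)
  congr 1
  apply Finset.filter_congr
  intro i _
  exact (runS_flip s i).symm

lemma card_SS_flip (k l : ℕ) (hkl : k + l = M) : (SS M k).card = (SS M l).card := by
  exact Finset.card_nbij' (i := fun s => fun x => ! s x) (j := fun s => fun x => ! s x)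
    (fun s hs => flip_mem k l hkl hs)
    (fun s hs => flip_mem l k (by omega) hs)
    (fun s _ => by funext x; simp)
    (fun s _ => by funext x; simp)

end RunsAux

/-- The expected number of runs of ones (resp. zeros) in a uniformly random binary
sequence of length `M = m_p + m_n` with exactly `m_p` ones is `m_p (1 + m_n) / M`
(resp. `m_n (1 + m_p) / M`). -/
theorem expected_number_of_runs (m_p m_n : ℕ) (hM : 1 ≤ m_p + m_n) :
    let M := m_p + m_n
    let S : Finset (Fin M → Bool) :=
      Finset.univ.filter (fun s => (Finset.univ.filter (fun i => s i = true)).card = m_p)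
    let runStart : (Fin M → Bool) → Bool → (Fin M) → Prop :=
      fun s b i => s i = b ∧ ((i : ℕ) = 0 ∨ ∃ j : Fin M, (j : ℕ) + 1 = (i : ℕ) ∧ s j = !b)
    let R : (Fin M → Bool) → Bool → ℕ :=
      fun s b => (Finset.univ.filter (fun i => runStart s b i)).card
    ((∑ s ∈ S, (R s true : ℝ)) / S.card = (m_p : ℝ) * (1 + m_n) / M) ∧
    ((∑ s ∈ S, (R s false : ℝ)) / S.card = (m_n : ℝ) * (1 + m_p) / M) := by
  intro M S runStart R
  have hS : S = RunsAux.SS M m_p := rfl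
  have hR : ∀ (s : Fin M → Bool) (b : Bool),
      R s b = (univ.filter (fun i => RunsAux.runS s b i)).card := by
    intro s b
    show (Finset.univ.filter (fun i => runStart s b i)).card = _
    congr 1
  have hMpos : (0 : ℝ) < (M : ℝ) := by
    exact_mod_cast Nat.lt_of_lt_of_le Nat.zero_lt_one hM
  constructor
  · have hkey := RunsAux.key (M := M) m_p m_n rfl hM
    have hpos := RunsAux.SS_card_pos (M := M) m_p m_n rfl
    simp only [hR, hS]
    rw [← Nat.cast_sum]
    have hC : (0 : ℝ) < ((RunsAux.SS M m_p).card : ℝ) := by exact_mod_cast hpos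
    rw [div_eq_div_iff hC.ne' hMpos.ne']
    have hcast := congrArg (Nat.cast : ℕ → ℝ) hkey
    push_cast at hcast ⊢
    linear_combination hcast
  · have hkl2 : m_n + m_p = M := Nat.add_comm m_n m_p
    have hkey := RunsAux.key (M := M) m_n m_p hkl2 hM
    have hpos := RunsAux.SS_card_pos (M := M) m_n m_p hkl2
    simp only [hR, hS]
    rw [← Nat.cast_sum, RunsAux.flip_sum m_p m_n rfl,
      RunsAux.card_SS_flip m_p m_n rfl]
    have hC : (0 : ℝ) < ((RunsAux.SS M m_n).card : ℝ) := by exact_mod_cast hpos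
    rw [div_eq_div_iff hC.ne' hMpos.ne']
    have hcast := congrArg (Nat.cast : ℕ → ℝ) hkey
    push_cast at hcast ⊢
    linear_combination hcast
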